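/- In the psychological 2x2 stage game, the attacker's psychological expected payoff from playing action b₁ with probability β against soldier strategy/belief α' (equal to second-order belief) is β'[α'(π'_{1,1} + ω_a(1−β')(π_{1,2} − π_{1,1})) + (1−α')π'_{2,1}] + (1−β')[α'π'_{1,2} + (1−α')(π'_{2,2} + ω_a β'(π_{2,1} − π_{2,2}))]; setting the attacker indifferent between b₁ and b₂ (equating the bracketed expressions) and solving for α' yields α' = (ω_a β'(π_{2,1} − π_{2,2}) + (π'_{2,2} − π'_{2,1})) / (D' + ω_a[β'(π_{2,1} − π_{2,2}) + (1 − β')(π_{1,2} − π_{1,1})]), where D' = π'_{1,1} + π'_{2,2} − π'_{1,2} − π'_{2,1}, provided the denominator is nonzero. -/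
import Mathlib


/-- solving the attacker's psychological indifference condition
for α' yields the stated closed form. -/
theorem stmt_15 (π11 π12 π21 π22 π'11 π'12 π'21 π'22 ωa α' β' D' : ℝ)
    (hD' : D' = π'11 + π'22 - π'12 - π'21)
    (hindiff : α' * (π'11 + ωa * (1 - β') * (π12 - π11)) + (1 - α') * π'21 =
      α' * π'12 + (1 - α') * (π'22 + ωa * β' * (π21 - π22)))
    (hden : D' + ωa * (β' * (π21 - π22) + (1 - β') * (π12 - π11)) ≠ 0) :
    α' = (ωa * β' * (π21 - π22) + (π'22 - π'21)) /
      (D' + ωa * (β' * (π21 - π22) + (1 - β') * (π12 - π11))) := by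
  rw [eq_div_iff hden]
  subst hD'
  linear_combination hindiff
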